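/- Let u(x,y) := (cos x − cos(√3·y))²/2 and h(y) := −4·sin²(√3·y), and let Ω := {(x,y) ∈ ℝ² : |x − 2π + √3·y| < 2π and |x − 2π − √3·y| < 2π}. Then u ≥ 0 on ℝ², Δu(x,y) + 4·u(x,y) + h(y) = 0 for all (x,y) ∈ ℝ², and u = 0 at every point of the boundary ∂Ω. -/

import Mathlib

open Real

/-- The planar Laplacian of `u : ℝ² → ℝ`: `Δu = ∂²u/∂x² + ∂²u/∂y²`. -/
noncomputable def planarLaplacian (u : ℝ × ℝ → ℝ) (p : ℝ × ℝ) : ℝ :=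
  deriv (fun t => deriv (fun s => u (s, p.2)) t) p.1 +
  deriv (fun t => deriv (fun s => u (p.1, s)) t) p.2

private lemma dx1 (c : ℝ) : (deriv fun s => (Real.cos s - c) ^ 2 / 2) =
    fun s => (Real.cos s - c) * (-Real.sin s) := by
  funext s
  have h : HasDerivAt (fun s => (Real.cos s - c) ^ 2 / 2)
      ((Real.cos s - c) * (-Real.sin s)) s := by
    have h1 := (((Real.hasDerivAt_cos s).sub_const c).pow 2).div_const 2
    refine HasDerivAt.congr_deriv h1 (Eq.symm ?_)
    ring
  exact h.deriv

private lemma dx2 (c : ℝ) (x : ℝ) :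
    deriv (fun s => (Real.cos s - c) * (-Real.sin s)) x =
      Real.sin x ^ 2 - (Real.cos x - c) * Real.cos x := by
  have h : HasDerivAt (fun s => (Real.cos s - c) * (-Real.sin s))
      (Real.sin x ^ 2 - (Real.cos x - c) * Real.cos x) x := by
    have h1 := ((Real.hasDerivAt_cos x).sub_const c).mul (Real.hasDerivAt_sin x).neg
    refine HasDerivAt.congr_deriv h1 (Eq.symm ?_)
    simp only [Pi.neg_apply]
    ring
  exact h.deriv

private lemma cossq (a : ℝ) (s : ℝ) :
    HasDerivAt (fun s => Real.cos (Real.sqrt 3 * s)) (-(Real.sqrt 3 * Real.sin (Real.sqrt 3 * s))) s := by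
  have h1 : HasDerivAt (fun s : ℝ => Real.sqrt 3 * s) (Real.sqrt 3) s := by
    simpa using (hasDerivAt_id s).const_mul (Real.sqrt 3)
  have := (Real.hasDerivAt_cos (Real.sqrt 3 * s)).comp s h1
  refine HasDerivAt.congr_deriv this (Eq.symm ?_)
  ring

private lemma dy1 (a : ℝ) : (deriv fun s => (a - Real.cos (Real.sqrt 3 * s)) ^ 2 / 2) =
    fun s => (a - Real.cos (Real.sqrt 3 * s)) * (Real.sqrt 3 * Real.sin (Real.sqrt 3 * s)) := by
  funext s
  have h : HasDerivAt (fun s => (a - Real.cos (Real.sqrt 3 * s)) ^ 2 / 2)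
      ((a - Real.cos (Real.sqrt 3 * s)) * (Real.sqrt 3 * Real.sin (Real.sqrt 3 * s))) s := by
    have h1 := (((cossq a s).const_sub a).pow 2).div_const 2
    refine HasDerivAt.congr_deriv h1 (Eq.symm ?_)
    ring
  exact h.deriv

private lemma dy2 (a : ℝ) (y : ℝ) :
    deriv (fun s => (a - Real.cos (Real.sqrt 3 * s)) * (Real.sqrt 3 * Real.sin (Real.sqrt 3 * s))) y =
      3 * Real.sin (Real.sqrt 3 * y) ^ 2 +
        (a - Real.cos (Real.sqrt 3 * y)) * (3 * Real.cos (Real.sqrt 3 * y)) := by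
  have h1 : HasDerivAt (fun s : ℝ => Real.sqrt 3 * s) (Real.sqrt 3) y := by
    simpa using (hasDerivAt_id y).const_mul (Real.sqrt 3)
  have hsin : HasDerivAt (fun s => Real.sin (Real.sqrt 3 * s))
      (Real.cos (Real.sqrt 3 * y) * Real.sqrt 3) y :=
    (Real.hasDerivAt_sin (Real.sqrt 3 * y)).comp y h1
  have h : HasDerivAt
      (fun s => (a - Real.cos (Real.sqrt 3 * s)) * (Real.sqrt 3 * Real.sin (Real.sqrt 3 * s)))
      (3 * Real.sin (Real.sqrt 3 * y) ^ 2 +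
        (a - Real.cos (Real.sqrt 3 * y)) * (3 * Real.cos (Real.sqrt 3 * y))) y := by
    have h2 := ((cossq a y).const_sub a).mul (hsin.const_mul (Real.sqrt 3))
    have h3 : Real.sqrt 3 * Real.sqrt 3 = 3 := Real.mul_self_sqrt (by norm_num)
    refine HasDerivAt.congr_deriv h2 (Eq.symm ?_)
    linear_combination (-(Real.sin (Real.sqrt 3 * y) ^ 2 +
      (a - Real.cos (Real.sqrt 3 * y)) * Real.cos (Real.sqrt 3 * y))) * h3
  exact h.deriv

private lemma cos_eq_of_shift (t : ℝ) : Real.cos (-t + 2 * π + 2 * π) = Real.cos t := by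
  rw [Real.cos_add_two_pi, Real.cos_add_two_pi, Real.cos_neg]

theorem explicit_example_rhombus :
    ∀ (u : ℝ × ℝ → ℝ) (h : ℝ → ℝ) (Ω : Set (ℝ × ℝ)),
      (u = fun p => (Real.cos p.1 - Real.cos (Real.sqrt 3 * p.2)) ^ 2 / 2) →
      (h = fun y => -4 * Real.sin (Real.sqrt 3 * y) ^ 2) →
      (Ω = {p : ℝ × ℝ |
        |p.1 - 2 * π + Real.sqrt 3 * p.2| < 2 * π ∧
        |p.1 - 2 * π - Real.sqrt 3 * p.2| < 2 * π}) →
      (∀ p : ℝ × ℝ, 0 ≤ u p) ∧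
      (∀ p : ℝ × ℝ, planarLaplacian u p + 4 * u p + h p.2 = 0) ∧
      (∀ p ∈ frontier Ω, u p = 0) := by
  intro u h Ω hu hh hΩ
  subst hu hh hΩ
  refine ⟨fun p => by positivity, ?_, ?_⟩
  · intro p
    obtain ⟨x, y⟩ := p
    simp only [planarLaplacian]
    rw [show (fun s => (fun p : ℝ × ℝ => (Real.cos p.1 - Real.cos (Real.sqrt 3 * p.2)) ^ 2 / 2) (s, y)) =
        (fun s => (Real.cos s - Real.cos (Real.sqrt 3 * y)) ^ 2 / 2) from rfl,
      show (fun s => (fun p : ℝ × ℝ => (Real.cos p.1 - Real.cos (Real.sqrt 3 * p.2)) ^ 2 / 2) (x, s)) =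
        (fun s => (Real.cos x - Real.cos (Real.sqrt 3 * s)) ^ 2 / 2) from rfl,
      dx1, dy1, dx2, dy2]
    have h1 := Real.sin_sq_add_cos_sq x
    have h2 := Real.sin_sq_add_cos_sq (Real.sqrt 3 * y)
    nlinarith [h1, h2]
  · intro p hp
    have hopen : IsOpen {p : ℝ × ℝ |
        |p.1 - 2 * π + Real.sqrt 3 * p.2| < 2 * π ∧
        |p.1 - 2 * π - Real.sqrt 3 * p.2| < 2 * π} := by
      have hc1 : Continuous fun p : ℝ × ℝ => |p.1 - 2 * π + Real.sqrt 3 * p.2| :=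
        ((continuous_fst.sub continuous_const).add (continuous_const.mul continuous_snd)).abs
      have hc2 : Continuous fun p : ℝ × ℝ => |p.1 - 2 * π - Real.sqrt 3 * p.2| :=
        ((continuous_fst.sub continuous_const).sub (continuous_const.mul continuous_snd)).abs
      exact IsOpen.inter (isOpen_lt hc1 continuous_const) (isOpen_lt hc2 continuous_const)
    have hsub : closure {p : ℝ × ℝ |
        |p.1 - 2 * π + Real.sqrt 3 * p.2| < 2 * π ∧
        |p.1 - 2 * π - Real.sqrt 3 * p.2| < 2 * π} ⊆ {p : ℝ × ℝ |
        |p.1 - 2 * π + Real.sqrt 3 * p.2| ≤ 2 * π ∧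
        |p.1 - 2 * π - Real.sqrt 3 * p.2| ≤ 2 * π} := by
      apply closure_minimal
      · intro q hq; exact ⟨hq.1.le, hq.2.le⟩
      · have hc1 : Continuous fun p : ℝ × ℝ => |p.1 - 2 * π + Real.sqrt 3 * p.2| :=
          ((continuous_fst.sub continuous_const).add (continuous_const.mul continuous_snd)).abs
        have hc2 : Continuous fun p : ℝ × ℝ => |p.1 - 2 * π - Real.sqrt 3 * p.2| :=
          ((continuous_fst.sub continuous_const).sub (continuous_const.mul continuous_snd)).abs
        exact IsClosed.inter (isClosed_le hc1 continuous_const) (isClosed_le hc2 continuous_const)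
    rw [frontier, hopen.interior_eq] at hp
    obtain ⟨hcl, hnot⟩ := hp
    have hle := hsub hcl
    have heq : |p.1 - 2 * π + Real.sqrt 3 * p.2| = 2 * π ∨
        |p.1 - 2 * π - Real.sqrt 3 * p.2| = 2 * π := by
      by_contra hc
      push_neg at hc
      exact hnot ⟨lt_of_le_of_ne hle.1 hc.1, lt_of_le_of_ne hle.2 hc.2⟩
    have key : Real.cos p.1 = Real.cos (Real.sqrt 3 * p.2) := by
      rcases heq with h1 | h1 <;> rw [abs_eq (by positivity)] at h1 <;> rcases h1 with h2 | h2
      · -- x - 2π + √3 y = 2π → x = -√3 y + 4π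
        rw [show p.1 = -(Real.sqrt 3 * p.2) + 2 * π + 2 * π by linarith]
        exact cos_eq_of_shift _
      · -- x - 2π + √3 y = -2π → x = -√3 y
        rw [show p.1 = -(Real.sqrt 3 * p.2) by linarith, Real.cos_neg]
      · -- x - 2π - √3 y = 2π → x = √3 y + 4π
        rw [show p.1 = Real.sqrt 3 * p.2 + 2 * π + 2 * π by linarith,
          Real.cos_add_two_pi, Real.cos_add_two_pi]
      · -- x - 2π - √3 y = -2π → x = √3 y
        rw [show p.1 = Real.sqrt 3 * p.2 by linarith]
    simp [key]
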